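/- (Stern's congruence) Let b be a nonnegative even integer and let k and m be positive integers. Then E_{2^m k + b} ≡ E_b + 2^m k (mod 2^{m+1}). -/

import Mathlib

/-- The Euler numbers `E n`, defined by `E 0 = 1`, `E (2n-1) = 0` for `n ≥ 1`,
and `∑_{r=0}^{n} C(2n, 2r) * E (2r) = 0` for `n ≥ 1`. -/
def eulerE : ℕ → ℤ
  | 0 => 1
  | 1 => 0
  | n + 2 =>
      if Even n then
        -∑ r ∈ (Finset.range (n / 2 + 1)).attach,
          ((n + 2).choose (2 * r.1) : ℤ) * eulerE (2 * r.1)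
      else 0
  decreasing_by
    have := r.2
    simp only [Finset.mem_range] at this
    omega

open Finset

lemma eulerE_odd (n : ℕ) (h : ¬ Even n) : eulerE n = 0 := by
  match n with
  | 0 => simp at h
  | 1 => rw [eulerE]
  | n + 2 =>
    rw [eulerE]
    rw [if_neg (by simpa [Nat.even_add] using h)]

lemma eulerE_rec (t : ℕ) :
    ∑ r ∈ range (t + 2), ((2*t + 2).choose (2 * r) : ℤ) * eulerE (2 * r) = 0 := by
  have hd : eulerE (2*t+2) = -∑ r ∈ (Finset.range (2*t / 2 + 1)).attach,
          ((2*t + 2).choose (2 * r.1) : ℤ) * eulerE (2 * r.1) := by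
    rw [eulerE, if_pos (even_two_mul t)]
  rw [Finset.sum_attach (range (2*t/2+1)) (fun r => ((2*t + 2).choose (2 * r) : ℤ) * eulerE (2 * r))] at hd
  have h2 : 2*t/2 + 1 = t + 1 := by omega
  rw [h2] at hd
  rw [Finset.sum_range_succ]
  have h3 : 2 * (t + 1) = 2*t + 2 := by ring
  rw [h3, Nat.choose_self, hd]
  push_cast
  ring

lemma sum_range_two_mul (M : ℕ) (f : ℕ → ℤ) :
    ∑ j ∈ range (2*M), f j = ∑ r ∈ range M, (f (2*r) + f (2*r+1)) := by
  induction M with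
  | zero => simp
  | succ m ih =>
      have : 2 * (m+1) = (2*m) + 1 + 1 := by ring
      rw [this, sum_range_succ, sum_range_succ, sum_range_succ, ih, add_assoc]

lemma sum_even_only (M : ℕ) (f : ℕ → ℤ) (hf : ∀ j, ¬ Even j → f j = 0) :
    ∑ j ∈ range (2*M+1), f j = ∑ r ∈ range (M+1), f (2*r) := by
  rw [sum_range_succ, sum_range_two_mul, sum_range_succ]
  congr 1
  apply Finset.sum_congr rfl
  intro r _
  rw [hf (2*r+1) (by simp [Nat.even_add_one, parity_simps])]
  ring

lemma lemA (l : ℕ) :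
    ∑ j ∈ range (l+1), (l.choose j : ℤ) * (1 + (-1)^(l-j)) * eulerE j
      = if l = 0 then 2 else 0 := by
  rcases Nat.even_or_odd l with he | ho
  · obtain ⟨t, rfl⟩ := he
    rcases Nat.eq_zero_or_pos t with rfl | ht
    · have e0 : eulerE 0 = 1 := by rw [eulerE]
      norm_num [e0]
    · obtain ⟨u, rfl⟩ : ∃ u, t = u + 1 := ⟨t - 1, by omega⟩
      have hl : u + 1 + (u + 1) = 2*u + 2 := by ring
      rw [hl]
      rw [if_neg (by omega)]
      have h1 : 2*u+2+1 = 2*(u+1)+1 := by ring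
      rw [h1, sum_even_only _ _ (by intro j hj; rw [eulerE_odd j hj]; ring)]
      have h2 : ∀ r ∈ range (u+2), ((2*u+2).choose (2*r) : ℤ) * (1 + (-1)^(2*u+2-2*r)) * eulerE (2*r)
          = 2 * (((2*u + 2).choose (2*r) : ℤ) * eulerE (2*r)) := by
        intro r hr
        simp only [mem_range] at hr
        have : Even (2*u+2-2*r) := by rw [Nat.even_iff]; omega
        obtain ⟨w, hw⟩ := this
        rw [hw]
        rw [Even.neg_one_pow ⟨w, rfl⟩]; ring
      rw [Finset.sum_congr rfl h2, ← Finset.mul_sum, eulerE_rec u]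
      ring
  · rw [if_neg (by rintro rfl; exact (Nat.not_even_iff_odd.mpr ho) (Even.zero))]
    apply Finset.sum_eq_zero
    intro j hj
    simp only [mem_range] at hj
    rcases Nat.even_or_odd j with hje | hjo
    · have : ¬ Even (l - j) := by
        rw [Nat.odd_iff] at ho; rw [Nat.even_iff] at hje ⊢; omega
      have : Odd (l - j) := Nat.not_even_iff_odd.mp this
      rw [Odd.neg_one_pow this]
      ring
    · rw [eulerE_odd j (Nat.not_even_iff_odd.mpr hjo)]; ring

lemma lemStar (n : ℕ) :
    ∑ j ∈ range (n+1), (n.choose j : ℤ) * 2^(n-j) * eulerE j = 2 - eulerE n := by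
  have key : ∑ l ∈ range (n+1), (n.choose l : ℤ) *
      (∑ j ∈ range (l+1), (l.choose j : ℤ) * (1 + (-1)^(l-j)) * eulerE j) = 2 := by
    have : ∀ l ∈ range (n+1), (n.choose l : ℤ) *
        (∑ j ∈ range (l+1), (l.choose j : ℤ) * (1 + (-1)^(l-j)) * eulerE j)
        = (n.choose l : ℤ) * (if l = 0 then 2 else 0) := by
      intro l _; rw [lemA l]
    rw [Finset.sum_congr rfl this]
    rw [Finset.sum_eq_single 0 (by intro b _ hb; rw [if_neg hb]; ring)
      (by intro h; exact absurd (Finset.self_mem_range_succ n) (by simpa using h))]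
    norm_num
  -- now rework the LHS of key by extending inner sums and swapping
  have ext : ∀ l ∈ range (n+1), (n.choose l : ℤ) *
      (∑ j ∈ range (l+1), (l.choose j : ℤ) * (1 + (-1)^(l-j)) * eulerE j)
      = ∑ j ∈ range (n+1), (n.choose l : ℤ) * ((l.choose j : ℤ) * (1 + (-1)^(l-j)) * eulerE j) := by
    intro l hl
    simp only [mem_range] at hl
    rw [Finset.mul_sum]
    apply Finset.sum_subset
    · intro x hx; simp only [mem_range] at *; omega
    · intro x _ hx
      simp only [mem_range, not_lt] at hx
      rw [Nat.choose_eq_zero_of_lt hx]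
      push_cast
      ring
  rw [Finset.sum_congr rfl ext, Finset.sum_comm] at key
  -- inner sum evaluation
  have inner : ∀ j ∈ range (n+1),
      ∑ l ∈ range (n+1), (n.choose l : ℤ) * ((l.choose j : ℤ) * (1 + (-1)^(l-j)) * eulerE j)
      = (n.choose j : ℤ) * (2^(n-j) + (if j = n then 1 else 0)) * eulerE j := by
    intro j hj
    simp only [mem_range, Nat.lt_succ_iff] at hj
    have step1 : ∑ l ∈ range (n+1), (n.choose l : ℤ) * ((l.choose j : ℤ) * (1 + (-1)^(l-j)) * eulerE j)
        = ∑ l ∈ Ico j (n+1), (n.choose l : ℤ) * ((l.choose j : ℤ) * (1 + (-1)^(l-j)) * eulerE j) := by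
      symm
      apply Finset.sum_subset
      · intro x hx; simp only [mem_Ico] at hx; simp only [mem_range]; omega
      · intro x hxr hx
        simp only [mem_range] at hxr
        simp only [mem_Ico, not_and, not_le] at hx
        have hxj : x < j := by
          by_contra hc
          push_neg at hc
          have := hx hc
          omega
        rw [Nat.choose_eq_zero_of_lt hxj]
        push_cast; ring
    rw [step1, Finset.sum_Ico_eq_sum_range]
    have hnj : n + 1 - j = (n - j) + 1 := by omega
    rw [hnj]
    have step2 : ∀ s ∈ range ((n-j)+1),
        (n.choose (j+s) : ℤ) * (((j+s).choose j : ℤ) * (1 + (-1)^((j+s)-j)) * eulerE j)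
        = ((n.choose j : ℤ) * eulerE j) * (((n-j).choose s : ℤ) * (1 + (-1)^s)) := by
      intro s hs
      simp only [mem_range, Nat.lt_succ_iff] at hs
      have h1 : j + s - j = s := by omega
      have h2 : n.choose (j+s) * (j+s).choose j = n.choose j * (n-j).choose ((j+s)-j) :=
        Nat.choose_mul (by omega)
      rw [h1] at h2 ⊢
      have h2' : (n.choose (j+s) : ℤ) * ((j+s).choose j : ℤ) = (n.choose j : ℤ) * ((n-j).choose s : ℤ) := by
        exact_mod_cast congrArg (Nat.cast : ℕ → ℤ) h2
      calc (n.choose (j+s) : ℤ) * (((j+s).choose j : ℤ) * (1 + (-1)^s) * eulerE j)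
          = ((n.choose (j+s) : ℤ) * ((j+s).choose j : ℤ)) * ((1 + (-1)^s) * eulerE j) := by ring
        _ = ((n.choose j : ℤ) * ((n-j).choose s : ℤ)) * ((1 + (-1)^s) * eulerE j) := by rw [h2']
        _ = ((n.choose j : ℤ) * eulerE j) * (((n-j).choose s : ℤ) * (1 + (-1)^s)) := by ring
    rw [Finset.sum_congr rfl step2, ← Finset.mul_sum]
    have step3 : ∑ s ∈ range ((n-j)+1), ((n-j).choose s : ℤ) * (1 + (-1)^s)
        = 2^(n-j) + (if j = n then 1 else 0) := by
      have h1 : ∑ s ∈ range ((n-j)+1), ((n-j).choose s : ℤ) = 2^(n-j) := by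
        have := Nat.sum_range_choose (n-j)
        exact_mod_cast congrArg (Nat.cast : ℕ → ℤ) this
      have h2 : ∑ s ∈ range ((n-j)+1), ((n-j).choose s : ℤ) * (-1)^s
          = if n - j = 0 then 1 else 0 := by
        have := Int.alternating_sum_range_choose (n := n - j)
        rw [← this]
        apply Finset.sum_congr rfl
        intro x _; ring
      have expand : ∀ s ∈ range ((n-j)+1), ((n-j).choose s : ℤ) * (1 + (-1)^s)
          = ((n-j).choose s : ℤ) + ((n-j).choose s : ℤ) * (-1)^s := by
        intro s _; ring
      rw [Finset.sum_congr rfl expand, Finset.sum_add_distrib, h1, h2]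
      have hiff : (n - j = 0) ↔ (j = n) := by omega
      simp only [hiff]
    rw [step3]
    ring
  rw [Finset.sum_congr rfl inner] at key
  have split : ∀ j ∈ range (n+1),
      (n.choose j : ℤ) * (2^(n-j) + (if j = n then 1 else 0)) * eulerE j
      = (n.choose j : ℤ) * 2^(n-j) * eulerE j + (if j = n then (n.choose j : ℤ) * eulerE j else 0) := by
    intro j _
    rcases eq_or_ne j n with rfl | hne
    · simp; ring
    · rw [if_neg hne, if_neg hne]; ring
  rw [Finset.sum_congr rfl split, Finset.sum_add_distrib] at key
  rw [Finset.sum_ite_eq' (range (n+1)) n (fun j => (n.choose j : ℤ) * eulerE j)] at key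
  rw [if_pos (self_mem_range_succ n), Nat.choose_self] at key
  push_cast at key
  linarith [key]


lemma lemStar' (n : ℕ) :
    ∑ s ∈ range (n+1), (n.choose s : ℤ) * 2^s * eulerE (n-s) = 2 - eulerE n := by
  rw [← lemStar n]
  rw [← Finset.sum_range_reflect (fun j => (n.choose j : ℤ) * 2^(n-j) * eulerE j) (n+1)]
  apply Finset.sum_congr rfl
  intro s hs
  simp only [mem_range, Nat.lt_succ_iff] at hs
  have h1 : n + 1 - 1 - s = n - s := by omega
  have h2 : n - (n - s) = s := by omega
  rw [h1, h2, Nat.choose_symm hs]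

lemma eulerE_odd_val (n : ℕ) (hn : Even n) : Odd (eulerE n) := by
  have h := lemStar' n
  rw [Finset.sum_range_succ'] at h
  -- h : ∑ s ∈ range n, C(n,s+1) 2^(s+1) E(n-(s+1)) + C(n,0)*2^0*E(n-0) = 2 - E n
  simp only [Nat.choose_zero_right, pow_zero, Nat.sub_zero, Nat.cast_one, one_mul, mul_one] at h
  -- so 2*E n = 2 - ∑ ...
  have h2 : 2 * eulerE n = 2 - ∑ s ∈ range n, (n.choose (s+1) : ℤ) * 2^(s+1) * eulerE (n-(s+1)) := by
    linarith [h]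
  rcases Nat.eq_zero_or_pos n with rfl | hpos
  · simp at h2
    exact ⟨0, by omega⟩
  · have hdvd : ∀ s ∈ range n, (4 : ℤ) ∣ (n.choose (s+1) : ℤ) * 2^(s+1) * eulerE (n-(s+1)) := by
      intro s hsr
      simp only [mem_range] at hsr
      rcases Nat.eq_zero_or_pos s with rfl | hs
      · -- s = 0 : term C(n,1)*2*E(n-1), n-1 odd
        have hodd : ¬ Even (n - 1) := by
          obtain ⟨t, rfl⟩ := hn
          rw [Nat.even_iff]; omega
        rw [eulerE_odd _ hodd]
        exact ⟨0, by ring⟩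
      · have h4 : (4 : ℤ) ∣ 2^(s+1) := by
          have hse : s + 1 = 2 + (s - 1) := by omega
          rw [hse, pow_add]
          exact ⟨2^(s-1), by norm_num⟩
        obtain ⟨c, hc⟩ := h4
        exact ⟨(n.choose (s+1) : ℤ) * c * eulerE (n-(s+1)), by rw [hc]; ring⟩
    obtain ⟨c, hc⟩ := Finset.dvd_sum hdvd
    rw [hc] at h2
    refine ⟨-c, by linarith⟩

lemma star2 (t : ℕ) :
    2 * eulerE t = 2 - ∑ s ∈ range t, ((t.choose (s+1)):ℤ) * 2^(s+1) * eulerE (t-(s+1)) := by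
  have h := lemStar' t
  rw [Finset.sum_range_succ'] at h
  simp only [Nat.choose_zero_right, pow_zero, Nat.sub_zero, Nat.cast_one, one_mul, mul_one] at h
  linarith

lemma helper_dvd : ∀ (t a d c : ℕ), 0 < d → d ≤ 2^t → 2^a ∣ d * c → 2^(a - t) ∣ c := by
  intro t
  induction t with
  | zero =>
      intro a d c hd hdt h
      have : d = 1 := by simpa using Nat.le_antisymm hdt hd
      subst this
      simpa using h
  | succ t ih =>
      intro a d c hd hdt h
      rcases Nat.even_or_odd d with ⟨d', rfl⟩ | hodd
      · rcases Nat.eq_zero_or_pos a with rfl | ha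
        · simpa using Nat.one_dvd c
        · obtain ⟨a', rfl⟩ : ∃ a', a = a' + 1 := ⟨a - 1, by omega⟩
          have h2 : 2^a' ∣ d' * c := by
            have : 2 * (2^a') ∣ 2 * (d' * c) := by
              have : (d' + d') * c = 2 * (d' * c) := by ring
              rw [← this, ← pow_succ']
              exact h
            exact (mul_dvd_mul_iff_left (by norm_num : (2:ℕ) ≠ 0)).mp this
          have := ih a' d' c (by omega) (by rw [pow_succ] at hdt; omega) h2
          have heq : a' - t = (a' + 1) - (t + 1) := by omega
          rwa [← heq]
      · have hcop : Nat.Coprime (2^a) d := by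
          apply Nat.Coprime.pow_left
          exact Nat.coprime_two_left.mpr hodd
        have := (Nat.Coprime.dvd_of_dvd_mul_left hcop h)
        exact dvd_trans (pow_dvd_pow 2 (by omega)) this

lemma choose_two_mul (t : ℕ) : (t.choose 2) * 2 = t * (t - 1) := by
  induction t with
  | zero => rfl
  | succ u ih =>
      rw [Nat.choose_succ_succ, Nat.choose_one_right, Nat.add_mul, ih, Nat.succ_sub_one]
      cases u with
      | zero => rfl
      | succ v => simp only [Nat.add_sub_cancel]; ring_nf

lemma main_dvd (m k : ℕ) (hm : 1 ≤ m) (hk : 1 ≤ k) :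
    ∀ n, Even n → (2:ℤ)^(m+1) ∣ eulerE (n + 2^m * k) - eulerE n - 2^m * k := by
  intro n
  induction n using Nat.strong_induction_on with
  | _ n IH =>
  intro hn
  set M : ℕ := 2^m * k with hMdef
  set N : ℕ := n + M with hNdef
  have hMge : 2 ≤ M := by
    have h2m : 2 ≤ 2^m := by
      calc 2 = 2^1 := rfl
      _ ≤ 2^m := Nat.pow_le_pow_right (by norm_num) hm
    calc 2 ≤ 2^m := h2m
    _ = 2^m * 1 := (mul_one _).symm
    _ ≤ 2^m * k := Nat.mul_le_mul_left _ hk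
  have hMeven : Even M := by
    rw [hMdef, Nat.even_mul]
    left
    exact (Nat.even_pow' (by omega)).mpr even_two
  have hNeven : Even N := by
    rw [hNdef]
    exact Even.add hn hMeven
  have hNge : 2 ≤ N := by omega
  -- the combined sum
  have hext : ∑ s ∈ range n, ((n.choose (s+1)):ℤ) * 2^(s+1) * eulerE (n-(s+1))
      = ∑ s ∈ range N, ((n.choose (s+1)):ℤ) * 2^(s+1) * eulerE (n-(s+1)) := by
    apply Finset.sum_subset
    · intro x hx; simp only [mem_range] at *; omega
    · intro x _ hx
      simp only [mem_range, not_lt] at hx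
      rw [Nat.choose_eq_zero_of_lt (by omega)]
      push_cast; ring
  set g : ℕ → ℤ := fun j =>
    (((N.choose j):ℤ) * eulerE (N - j) - ((n.choose j):ℤ) * eulerE (n - j)) * 2^j with hg
  have hcomb : 2 * (eulerE N - eulerE n - (M:ℤ)) = -((∑ s ∈ range N, g (s+1)) + 2*M) := by
    have h1 := star2 N
    have h2 := star2 n
    rw [hext] at h2
    have : ∑ s ∈ range N, g (s+1)
        = ∑ s ∈ range N, ((N.choose (s+1)):ℤ) * 2^(s+1) * eulerE (N-(s+1))
          - ∑ s ∈ range N, ((n.choose (s+1)):ℤ) * 2^(s+1) * eulerE (n-(s+1)) := by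
      rw [← Finset.sum_sub_distrib]
      apply Finset.sum_congr rfl
      intro s _
      rw [hg]; ring
    rw [this]
    linarith
  -- main divisibility claim mod 2^(m+2)
  have hMcast : ((M:ℕ):ℤ) = 2^m*(k:ℤ) := by rw [hMdef]; push_cast; ring
  suffices hdvd2 : (2:ℤ)^(m+2) ∣ (∑ s ∈ range N, g (s+1)) + 2*M by
    have h2 : (2:ℤ)^(m+2) ∣ 2 * (eulerE N - eulerE n - (M:ℤ)) := by
      rw [hcomb]; exact dvd_neg.mpr hdvd2
    have h3 : (2:ℤ)^(m+2) = 2 * 2^(m+1) := by rw [pow_succ']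
    rw [h3] at h2
    have h4 := (mul_dvd_mul_iff_left (by norm_num : (2:ℤ) ≠ 0)).mp h2
    rw [hMcast] at h4
    convert h4 using 2
  
  -- Part A : the difference part, via induction hypothesis
  have hA : ∀ j : ℕ, 2 ≤ j → Even j →
      (2:ℤ)^(m+2) ∣ ((n.choose j):ℤ) * (eulerE (N-j) - eulerE (n-j)) * 2^j := by
    intro j hj2 hje
    rcases le_or_gt j n with hjn | hnj
    · have hsub : N - j = (n - j) + M := by omega
      have hev : Even (n - j) := (Nat.even_sub hjn).mpr (iff_of_true hn hje)
      have hlt : n - j < n := by omega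
      obtain ⟨c, hc⟩ := IH (n - j) hlt hev
      have hc' : eulerE (N - j) - eulerE (n - j) = 2^m*(k:ℤ) + 2^(m+1)*c := by
        rw [hsub]
        have : (n - j) + 2^m * k = (n - j) + M := by rw [hMdef]
        rw [this] at hc
        linarith
      obtain ⟨j', rfl⟩ : ∃ j', j = j' + 2 := ⟨j - 2, by omega⟩
      refine ⟨((n.choose (j'+2)):ℤ) * ((k:ℤ) + 2*c) * 2^j', ?_⟩
      rw [hc']
      ring
    · rw [Nat.choose_eq_zero_of_lt hnj]
      push_cast
      exact ⟨0, by ring⟩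
  -- Part B core : binomial coefficients of M
  have hB : ∀ j d : ℕ, 1 ≤ d → d ≤ j → (4 ≤ j ∨ (d = 1 ∧ 2 ≤ j)) →
      (2:ℤ)^(m+2) ∣ ((M.choose d):ℤ) * 2^j := by
    intro j d hd1 hdj hcase
    have hj2 : 2 ≤ j := by rcases hcase with h | ⟨_, h⟩ <;> omega
    rcases le_or_gt (m+2) j with hbig | hsmall
    · exact Dvd.dvd.mul_left (pow_dvd_pow 2 hbig) _
    · rcases hcase with h4 | ⟨rfl, _⟩
      · -- 4 ≤ j ≤ m+1
        have hjle : j ≤ 2^(j-2) := by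
          obtain ⟨u, rfl⟩ : ∃ u, j = u + 4 := ⟨j - 4, by omega⟩
          have h1 : u + 1 < 2^(u+1) := Nat.lt_two_pow_self
          have h2 : u + 4 - 2 = u + 2 := by omega
          rw [h2, pow_succ]
          omega
        have hdvd_nat : 2^m ∣ d * M.choose d := by
          have hiden := Nat.add_one_mul_choose_eq (M-1) (d-1)
          have e1 : M - 1 + 1 = M := by omega
          have e2 : d - 1 + 1 = d := by omega
          simp only [Nat.succ_eq_add_one, e1, e2] at hiden
          refine ⟨k * (M-1).choose (d-1), ?_⟩
          calc d * M.choose d = M.choose d * d := by ring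
          _ = M * (M-1).choose (d-1) := hiden.symm
          _ = 2^m * (k * (M-1).choose (d-1)) := by rw [hMdef]; ring
        have h2 : 2^(m-(j-2)) ∣ M.choose d :=
          helper_dvd (j-2) m d _ (by omega) (le_trans hdj hjle) hdvd_nat
        obtain ⟨c, hc⟩ := h2
        refine ⟨(c:ℤ), ?_⟩
        have hexp : (m-(j-2)) + j = m+2 := by omega
        calc ((M.choose d):ℤ) * 2^j = ((2^(m-(j-2)) * c : ℕ) : ℤ) * 2^j := by rw [hc]
        _ = 2^(m-(j-2)) * (c:ℤ) * 2^j := by push_cast; ring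
        _ = 2^((m-(j-2)) + j) * (c:ℤ) := by rw [pow_add]; ring
        _ = 2^(m+2) * (c:ℤ) := by rw [hexp]
      · -- d = 1
        rw [Nat.choose_one_right]
        obtain ⟨j', rfl⟩ : ∃ j', j = j' + 2 := ⟨j - 2, by omega⟩
        refine ⟨(k:ℤ) * 2^j', ?_⟩
        rw [hMcast]
        ring
  
  -- odd j : term vanishes
  have hgodd : ∀ j, j ≤ N → ¬ Even j → g j = 0 := by
    intro j hjN hjo
    rw [hg]
    simp only
    have hE1 : eulerE (N - j) = 0 := by
      apply eulerE_odd
      rw [Nat.even_iff] at hNeven hjo ⊢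
      omega
    rw [hE1]
    rcases le_or_gt j n with hjn | hnj
    · have hE2 : eulerE (n - j) = 0 := by
        apply eulerE_odd
        rw [Nat.even_iff] at hn hjo ⊢
        omega
      rw [hE2]; ring
    · rw [Nat.choose_eq_zero_of_lt hnj]; push_cast; ring
  -- decomposition of g j via Vandermonde
  have hsplit : ∀ j : ℕ, ((N.choose j):ℤ) - ((n.choose j):ℤ)
      = ∑ p ∈ (Finset.HasAntidiagonal.antidiagonal j).erase (0, j), ((M.choose p.1):ℤ) * ((n.choose p.2):ℤ) := by
    intro j
    have hvan : N.choose j = ∑ p ∈ Finset.HasAntidiagonal.antidiagonal j, M.choose p.1 * n.choose p.2 := by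
      rw [hNdef, add_comm n M]
      exact Nat.add_choose_eq M n j
    have hmem : ((0:ℕ), j) ∈ Finset.HasAntidiagonal.antidiagonal j := by simp
    rw [← Finset.add_sum_erase _ _ hmem] at hvan
    simp only [Nat.choose_zero_right, one_mul] at hvan
    rw [hvan]
    push_cast
    ring
  -- even j ≥ 4 : whole term divisible
  have hgeven : ∀ j, Even j → 4 ≤ j → (2:ℤ)^(m+2) ∣ g j := by
    intro j hje hj4
    have hdecomp : g j = ((n.choose j):ℤ) * (eulerE (N-j) - eulerE (n-j)) * 2^j
        + (((N.choose j):ℤ) - ((n.choose j):ℤ)) * eulerE (N-j) * 2^j := by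
      rw [hg]; ring
    rw [hdecomp]
    apply dvd_add (hA j (by omega) hje)
    rw [hsplit j, Finset.sum_mul, Finset.sum_mul]
    apply Finset.dvd_sum
    intro p hp
    have hpm := Finset.mem_of_mem_erase hp
    rw [Finset.HasAntidiagonal.mem_antidiagonal] at hpm
    have hpne := Finset.ne_of_mem_erase hp
    have hp1 : 1 ≤ p.1 := by
      rcases Nat.eq_zero_or_pos p.1 with h0 | h1
      · exfalso; apply hpne
        have : p.2 = j := by omega
        exact Prod.ext h0 this
      · exact h1
    obtain ⟨c, hc⟩ := hB j p.1 hp1 (by omega) (Or.inl hj4)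
    refine ⟨c * (((n.choose p.2):ℤ) * eulerE (N-j)), ?_⟩
    calc ((M.choose p.1):ℤ) * ((n.choose p.2):ℤ) * eulerE (N-j) * 2^j
        = (((M.choose p.1):ℤ) * 2^j) * (((n.choose p.2):ℤ) * eulerE (N-j)) := by ring
      _ = 2^(m+2) * (c * (((n.choose p.2):ℤ) * eulerE (N-j))) := by rw [hc]; ring
  
  -- integer version of choose-two identity
  have choose_two_int : ∀ t : ℕ, ((t.choose 2):ℤ)*2 = (t:ℤ)*((t:ℤ)-1) := by
    intro t
    cases t with
    | zero => simp
    | succ u =>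
        have h := choose_two_mul (u+1)
        have h' : (((u+1).choose 2 : ℕ):ℤ)*2 = ((u+1):ℤ)*(u:ℤ) := by
          exact_mod_cast congrArg (Nat.cast : ℕ → ℤ) h
        push_cast at h' ⊢
        linarith
  have hNcast : ((N:ℕ):ℤ) = (n:ℤ) + (M:ℤ) := by rw [hNdef]; push_cast; ring
  have hchoose_diff : 2*(((N.choose 2):ℤ) - ((n.choose 2):ℤ)) = (M:ℤ)*(2*(n:ℤ) + (M:ℤ) - 1) := by
    have h1 := choose_two_int N
    have h2 := choose_two_int n
    calc 2*(((N.choose 2):ℤ) - ((n.choose 2):ℤ))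
        = ((N.choose 2):ℤ)*2 - ((n.choose 2):ℤ)*2 := by ring
      _ = (N:ℤ)*((N:ℤ)-1) - (n:ℤ)*((n:ℤ)-1) := by rw [h1, h2]
      _ = ((n:ℤ)+(M:ℤ))*((n:ℤ)+(M:ℤ)-1) - (n:ℤ)*((n:ℤ)-1) := by rw [hNcast]
      _ = (M:ℤ)*(2*(n:ℤ) + (M:ℤ) - 1) := by ring
  have hg2 : (2:ℤ)^(m+2) ∣ g 2 + 2*(M:ℤ) := by
    have hEodd : Odd (eulerE (N-2)) := by
      apply eulerE_odd_val
      rw [Nat.even_iff] at hNeven ⊢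
      omega
    have hModd : Odd (2*(n:ℤ) + (M:ℤ) - 1) := by
      obtain ⟨M', hM'⟩ := hMeven
      refine ⟨(n:ℤ) + (M':ℤ) - 1, ?_⟩
      have : (M:ℤ) = (M':ℤ) + (M':ℤ) := by exact_mod_cast congrArg (Nat.cast : ℕ → ℤ) hM'
      rw [this]; ring
    obtain ⟨w, hw⟩ := Odd.mul hModd hEodd
    have hp : (2:ℤ)^(m+2) = 2^m*4 := by rw [pow_add]; norm_num
    have hg2eq : g 2 + 2*(M:ℤ)
        = ((n.choose 2):ℤ)*(eulerE (N-2) - eulerE (n-2))*2^2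
          + ((M:ℤ)*(2*(n:ℤ)+(M:ℤ)-1)*eulerE (N-2)*2 + 2*(M:ℤ)) := by
      rw [hg]
      simp only
      linear_combination (2*eulerE (N-2)) * hchoose_diff
    rw [hg2eq]
    apply dvd_add (hA 2 (le_refl 2) even_two)
    refine ⟨(k:ℤ)*(w+1), ?_⟩
    calc (M:ℤ)*(2*(n:ℤ)+(M:ℤ)-1)*eulerE (N-2)*2 + 2*(M:ℤ)
        = 2*(M:ℤ)*((2*(n:ℤ)+(M:ℤ)-1)*eulerE (N-2) + 1) := by ring
      _ = 2*(M:ℤ)*(2*w+1+1) := by rw [hw]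
      _ = 2^m*(k:ℤ)*(4*w+4) := by rw [hMcast]; ring
      _ = 2^(m+2)*((k:ℤ)*(w+1)) := by rw [hp]; ring
  have claim : ∀ s ∈ (range N).erase 1, (2:ℤ)^(m+2) ∣ g (s+1) := by
    intro s hs
    have hs1 := Finset.ne_of_mem_erase hs
    have hsr := Finset.mem_of_mem_erase hs
    rw [mem_range] at hsr
    rcases Nat.even_or_odd (s+1) with he | ho
    · have h4 : 4 ≤ s + 1 := by
        rw [Nat.even_iff] at he
        omega
      exact hgeven (s+1) he h4
    · rw [hgodd (s+1) (by omega) (Nat.not_even_iff_odd.mpr ho)]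
      exact dvd_zero _
  have h1mem : (1:ℕ) ∈ range N := by rw [mem_range]; omega
  rw [← Finset.add_sum_erase (range N) (fun s => g (s+1)) h1mem]
  have hre : (g (1+1) + ∑ s ∈ (range N).erase 1, g (s+1)) + 2*(M:ℤ)
      = (g 2 + 2*(M:ℤ)) + ∑ s ∈ (range N).erase 1, g (s+1) := by
    norm_num
    ring
  rw [hre]
  exact dvd_add hg2 (Finset.dvd_sum claim)

theorem stern_congruence (b k m : ℕ) (hb : Even b) (hk : 0 < k) (hm : 0 < m) :
    eulerE (2 ^ m * k + b) ≡ eulerE b + 2 ^ m * k [ZMOD 2 ^ (m + 1)] := by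
  have h := main_dvd m k hm hk b hb
  have hidx : 2^m * k + b = b + 2^m * k := by ring
  rw [hidx]
  rw [Int.ModEq]
  refine Int.modEq_iff_dvd.mpr ?_
  have : eulerE b + 2^m*(k:ℤ) - eulerE (b + 2^m*k) = -(eulerE (b + 2^m*k) - eulerE b - 2^m*k) := by ring
  rw [this]
  exact dvd_neg.mpr h
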